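/- arXiv:1903.04406 — 7 statements merged into one kernel-verified Lean document; each statement's English description precedes it below -/
import Mathlib

section
/- Let G be a subset of a real topological vector space L. Then the topological closure of the conic hull of G (the set of all finite nonnegative linear combinations of elements of G, closed topologically) equals the smallest set containing G and all nonnegative gambles that is closed under nonnegative linear combinations and topological limits. Moreover, the following are equivalent: (1) there exists g in L not in cl(posi(G ∪ L≥)); (2) cl(posi(G ∪ L≥)) contains no gamble g with sup g < 0; (3) the constant function -1 is not in cl(posi(G ∪ L≥)). Here L is the space of bounded real-valued functions on a set Ω and L≥ its subset of nonnegative functions. -/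
open BoundedContinuousFunction

/-- Conic hull: all finite nonnegative linear combinations of elements of `G`. -/
def posi {E : Type*} [AddCommMonoid E] [Module ℝ E] (G : Set E) : Set E :=
  {f | ∃ (k : ℕ) (l : Fin k → ℝ) (g : Fin k → E),
    (∀ i, 0 ≤ l i) ∧ (∀ i, g i ∈ G) ∧ f = ∑ i, l i • g i}

lemma subset_posi {E : Type*} [AddCommMonoid E] [Module ℝ E] (G : Set E) :
    G ⊆ posi G := by
  intro g hg
  exact ⟨1, fun _ => 1, fun _ => g, fun _ => zero_le_one, fun _ => hg, by simp⟩

lemma zero_mem_posi {E : Type*} [AddCommMonoid E] [Module ℝ E] (G : Set E) :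
    (0 : E) ∈ posi G :=
  ⟨0, Fin.elim0, Fin.elim0, fun i => i.elim0, fun i => i.elim0, by simp⟩

lemma posi_combo {E : Type*} [AddCommMonoid E] [Module ℝ E] {G : Set E} {f h : E}
    (hf : f ∈ posi G) (hh : h ∈ posi G) {a b : ℝ} (ha : 0 ≤ a) (hb : 0 ≤ b) :
    a • f + b • h ∈ posi G := by
  obtain ⟨k, l, g, hl, hg, rfl⟩ := hf
  obtain ⟨m, l', g', hl', hg', rfl⟩ := hh
  refine ⟨k + m, Fin.addCases (fun i => a * l i) (fun j => b * l' j),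
    Fin.addCases g g', ?_, ?_, ?_⟩
  · intro i
    refine Fin.addCases (fun i => ?_) (fun j => ?_) i <;> simp <;>
      [exact mul_nonneg ha (hl i); exact mul_nonneg hb (hl' j)]
  · intro i
    refine Fin.addCases (fun i => ?_) (fun j => ?_) i <;> simp [hg, hg']
  · rw [Fin.sum_univ_add]
    simp [Finset.smul_sum, mul_smul]

lemma mem_of_mem_posi {E : Type*} [AddCommMonoid E] [Module ℝ E] {G : Set E}
    {C : Set E} (hGC : G ⊆ C) (h0 : (0 : E) ∈ C)
    (hC : ∀ f ∈ C, ∀ h ∈ C, ∀ a b : ℝ, 0 ≤ a → 0 ≤ b → a • f + b • h ∈ C)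
    {f : E} (hf : f ∈ posi G) : f ∈ C := by
  obtain ⟨k, l, g, hl, hg, rfl⟩ := hf
  induction k with
  | zero => simpa using h0
  | succ n ih =>
    rw [Fin.sum_univ_succ]
    have h1 : (∑ i : Fin n, l i.succ • g i.succ) ∈ C :=
      ih _ _ (fun i => hl i.succ) (fun i => hg i.succ)
    have := hC (g 0) (hGC (hg 0)) (∑ i : Fin n, l i.succ • g i.succ) h1
      (l 0) 1 (hl 0) zero_le_one
    simpa using this

/-- `Ω` with the discrete topology, so that `Ω →ᵇ ℝ` is exactly the
space of bounded real-valued functions on `Ω` with the sup norm. -/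
theorem stmt0 {Ω : Type*} [TopologicalSpace Ω] [DiscreteTopology Ω] [Nonempty Ω]
    (G : Set (Ω →ᵇ ℝ)) (Lge : Set (Ω →ᵇ ℝ)) (hLge : Lge = {g : Ω →ᵇ ℝ | ∀ x, 0 ≤ g x}) :
    closure (posi (G ∪ Lge)) =
      ⋂₀ {C : Set (Ω →ᵇ ℝ) | G ⊆ C ∧ Lge ⊆ C ∧
        (∀ f ∈ C, ∀ h ∈ C, ∀ a b : ℝ, 0 ≤ a → 0 ≤ b → a • f + b • h ∈ C) ∧ IsClosed C} ∧
    List.TFAE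
      [(∃ g : Ω →ᵇ ℝ, g ∉ closure (posi (G ∪ Lge))),
       (¬ ∃ g ∈ closure (posi (G ∪ Lge)), (⨆ x, g x) < 0),
       ((const Ω (-1) : Ω →ᵇ ℝ) ∉ closure (posi (G ∪ Lge)))] := by
  set P := posi (G ∪ Lge) with hP
  have h0 : (0 : Ω →ᵇ ℝ) ∈ P := zero_mem_posi _
  have hcombo : ∀ f ∈ closure P, ∀ h ∈ closure P, ∀ a b : ℝ, 0 ≤ a → 0 ≤ b →
      a • f + b • h ∈ closure P := by
    intro f hf h hh a b ha hb
    have hcont : Continuous fun p : (Ω →ᵇ ℝ) × (Ω →ᵇ ℝ) => a • p.1 + b • p.2 := by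
      fun_prop
    exact map_mem_closure₂ (f := fun x y : Ω →ᵇ ℝ => a • x + b • y) hcont hf hh
      fun x hx y hy => posi_combo hx hy ha hb
  -- membership of `-1` implies everything is in the closure
  have key : (const Ω (-1) : Ω →ᵇ ℝ) ∈ closure P → ∀ f : Ω →ᵇ ℝ, f ∈ closure P := by
    intro hm f
    have hfn : (f + const Ω ‖f‖) ∈ Lge := by
      rw [hLge]
      intro x
      simp only [BoundedContinuousFunction.coe_add, Pi.add_apply, const_apply]
      have h1 : |f x| ≤ ‖f‖ := by simpa [Real.norm_eq_abs] using f.norm_coe_le_norm x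
      linarith [neg_abs_le (f x)]
    have h2 : (f + const Ω ‖f‖) ∈ closure P :=
      subset_closure (subset_posi _ (Or.inr hfn))
    have h3 : ‖f‖ • (const Ω (-1) : Ω →ᵇ ℝ) + (1:ℝ) • (f + const Ω ‖f‖) ∈ closure P :=
      hcombo _ hm _ h2 _ _ (norm_nonneg f) zero_le_one
    have : ‖f‖ • (const Ω (-1) : Ω →ᵇ ℝ) + (1:ℝ) • (f + const Ω ‖f‖) = f := by
      ext x; simp
    rwa [this] at h3
  constructor
  · apply subset_antisymm
    · intro f hf C hC
      obtain ⟨hGC, hLC, hcC, hclC⟩ := hC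
      refine (IsClosed.closure_subset_iff hclC).mpr ?_ hf
      intro x hx
      exact mem_of_mem_posi (Set.union_subset hGC hLC)
        (hLC (by rw [hLge]; intro x; simp)) hcC hx
    · intro f hf
      refine hf (closure P) ⟨?_, ?_, hcombo, isClosed_closure⟩
      · exact fun g hg => subset_closure (subset_posi _ (Or.inl hg))
      · exact fun g hg => subset_closure (subset_posi _ (Or.inr hg))
  · tfae_have 1 → 2 := by
      rintro ⟨g, hg⟩ ⟨f, hf, hsup⟩
      apply hg
      apply key _ g
      -- from f with sup < 0, build -1
      set s : ℝ := ⨆ x, f x with hs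
      have hb : BddAbove (Set.range f) := f.isBounded_range.bddAbove
      have hle : ∀ x, f x ≤ s := fun x => le_ciSup hb x
      have hsne : s < 0 := hsup
      set c : ℝ := (-s)⁻¹ with hc
      have hcpos : 0 < c := inv_pos.mpr (by linarith)
      have hLmem : (const Ω (-1) - c • f) ∈ Lge := by
        rw [hLge]
        intro x
        simp only [BoundedContinuousFunction.coe_sub, Pi.sub_apply, const_apply,
          BoundedContinuousFunction.coe_smul, Pi.smul_apply, smul_eq_mul]
        have h1 : c * f x ≤ c * s := mul_le_mul_of_nonneg_left (hle x) hcpos.le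
        have h2 : c * s = -1 := by
          rw [hc, inv_mul_eq_div, div_neg, div_self hsup.ne]
        linarith
      have h4 : (1:ℝ) • (c • f) + (1:ℝ) • (const Ω (-1) - c • f) ∈ closure P := by
        refine hcombo _ ?_ _ (subset_closure (subset_posi _ (Or.inr hLmem))) 1 1
          zero_le_one zero_le_one
        simpa using hcombo f hf 0 (subset_closure h0) c 0 hcpos.le le_rfl
      simpa using h4
    tfae_have 2 → 3 := by
      intro h2 hm
      refine h2 ⟨const Ω (-1), hm, ?_⟩
      simp [ciSup_const]
    tfae_have 3 → 1 := fun h => ⟨const Ω (-1), h⟩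
    tfae_finish
end

section
/- The polynomial q(θ₁,θ₂) = θ₁² - θ₁θ₂ + θ₂² is nonnegative on the probability simplex {(θ₁,θ₂) : θ₁ ≥ 0, θ₂ ≥ 0, θ₁ + θ₂ ≤ 1} (indeed nonnegative on all of ℝ²), but it does not belong to the Bernstein cone Σ≥_2, i.e., there exist no nonnegative reals u_α such that q(θ) = Σ_{α ∈ ℕ³, |α| = 2} u_α θ₁^{α₁} θ₂^{α₂} (1-θ₁-θ₂)^{α₃} as an identity of polynomials. -/
open MvPolynomial

/-- The multivariate Bernstein polynomial `B_{γ,d}` in `n` variables. -/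
noncomputable def bern (n d : ℕ) (γ : Fin n → ℕ) : MvPolynomial (Fin n) ℝ :=
  C ((d.factorial / ((∏ i, (γ i).factorial) * (d - ∑ i, γ i).factorial) : ℕ) : ℝ) *
    (∏ i, X i ^ γ i) * (1 - ∑ i, X i) ^ (d - ∑ i, γ i)

/-- Multi-indices `γ ∈ ℕⁿ` with `|γ| ≤ d`, as a finset. -/
def multiIdx (n d : ℕ) : Finset (Fin n → ℕ) :=
  (Fintype.piFinset fun _ : Fin n => Finset.range (d + 1)).filter fun γ => ∑ i, γ i ≤ d

/-- `θ₁^{α₁}⋯θₙ^{αₙ}(1-θ₁-⋯-θₙ)^{α_{n+1}}` for `α ∈ ℕ^{n+1}`. -/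
noncomputable def kvGen (n : ℕ) (α : Fin (n + 1) → ℕ) : MvPolynomial (Fin n) ℝ :=
  (∏ i : Fin n, X i ^ α i.castSucc) * (1 - ∑ i, X i) ^ α (Fin.last n)

/-- Multi-indices `α ∈ ℕ^{n+1}` with `|α| ≤ d`. -/
def kvIdxLe (n d : ℕ) : Finset (Fin (n + 1) → ℕ) :=
  (Fintype.piFinset fun _ : Fin (n + 1) => Finset.range (d + 1)).filter fun α => ∑ i, α i ≤ d

/-- Multi-indices `α ∈ ℕ^{n+1}` with `|α| = d`. -/
def kvIdxEq (n d : ℕ) : Finset (Fin (n + 1) → ℕ) :=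
  (Fintype.piFinset fun _ : Fin (n + 1) => Finset.range (d + 1)).filter fun α => ∑ i, α i = d

/-- The Bernstein cone `Σ≥_d`: nonnegative combinations over `|α| ≤ d`. -/
noncomputable def coneLe (n d : ℕ) : Set (MvPolynomial (Fin n) ℝ) :=
  {g | ∃ u : (Fin (n + 1) → ℕ) → ℝ, (∀ α, 0 ≤ u α) ∧
    g = ∑ α ∈ kvIdxLe n d, C (u α) * kvGen n α}

/-- The cone `Σ̃≥_d`: nonnegative combinations over `|α| = d`. -/
noncomputable def coneEq (n d : ℕ) : Set (MvPolynomial (Fin n) ℝ) :=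
  {g | ∃ u : (Fin (n + 1) → ℕ) → ℝ, (∀ α, 0 ≤ u α) ∧
    g = ∑ α ∈ kvIdxEq n d, C (u α) * kvGen n α}

/-- `q = θ₁² - θ₁θ₂ + θ₂²` is nonnegative on all of ℝ² (hence on
the probability simplex), but does not belong to the Bernstein cone `Σ≥_2`. -/
theorem stmt10 :
    (∀ θ : Fin 2 → ℝ, 0 ≤ eval θ (X 0 ^ 2 - X 0 * X 1 + X 1 ^ 2 : MvPolynomial (Fin 2) ℝ)) ∧
    (∀ θ : Fin 2 → ℝ, (∀ j, 0 ≤ θ j) → θ 0 + θ 1 ≤ 1 →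
      0 ≤ eval θ (X 0 ^ 2 - X 0 * X 1 + X 1 ^ 2 : MvPolynomial (Fin 2) ℝ)) ∧
    (X 0 ^ 2 - X 0 * X 1 + X 1 ^ 2 : MvPolynomial (Fin 2) ℝ) ∉ coneEq 2 2 := by
  refine ⟨?_, ?_, ?_⟩
  · intro θ
    simp only [eval_add, eval_sub, eval_pow, eval_mul, eval_X]
    nlinarith [sq_nonneg (θ 0 - θ 1), sq_nonneg (θ 0 + θ 1)]
  · intro θ _ _
    simp only [eval_add, eval_sub, eval_pow, eval_mul, eval_X]
    nlinarith [sq_nonneg (θ 0 - θ 1), sq_nonneg (θ 0 + θ 1)]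
  · rintro ⟨u, hu, hq⟩
    have hidx : kvIdxEq 2 2 =
        ({![2,0,0], ![0,2,0], ![0,0,2], ![1,1,0], ![1,0,1], ![0,1,1]} : Finset (Fin 3 → ℕ)) := by
      decide
    have key : ∀ θ : Fin 2 → ℝ,
        θ 0 ^ 2 - θ 0 * θ 1 + θ 1 ^ 2 =
          u ![2,0,0] * (θ 0 ^ 2 * (1 - (θ 0 + θ 1)) ^ 0)
          + u ![0,2,0] * (θ 1 ^ 2 * (1 - (θ 0 + θ 1)) ^ 0)
          + u ![0,0,2] * ((1 - (θ 0 + θ 1)) ^ 2)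
          + u ![1,1,0] * (θ 0 * θ 1 * (1 - (θ 0 + θ 1)) ^ 0)
          + u ![1,0,1] * (θ 0 * (1 - (θ 0 + θ 1)) ^ 1)
          + u ![0,1,1] * (θ 1 * (1 - (θ 0 + θ 1)) ^ 1) := by
      intro θ
      have := congrArg (eval θ) hq
      rw [hidx] at this
      rw [Finset.sum_insert (by decide), Finset.sum_insert (by decide),
        Finset.sum_insert (by decide), Finset.sum_insert (by decide),
        Finset.sum_insert (by decide), Finset.sum_singleton] at this
      simp only [kvGen, Fin.prod_univ_two, Fin.sum_univ_two, Fin.last,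
        Matrix.cons_val_zero, Matrix.cons_val_one, Matrix.head_cons,
        map_mul, map_add, map_sub, map_pow, map_sum, eval_C, eval_X, map_one,
        Fin.castSucc_zero, Fin.castSucc_one, Matrix.cons_val_two, Matrix.tail_cons,
        eval_mul, eval_add, eval_pow, eval_sub] at this
      norm_num at this
      linear_combination this
    have hB := key ![1, 0]
    have hC := key ![0, 1]
    have hD := key ![1/2, 1/2]
    norm_num [Matrix.cons_val_zero, Matrix.cons_val_one, Matrix.head_cons] at hB hC hD
    have h110 := hu ![1,1,0]
    nlinarith [hu ![0,0,2], hu ![1,0,1], hu ![0,1,1]]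
end

section
/- For the polynomial q(θ₁,θ₂) = θ₁² - θ₁θ₂ + θ₂², the supremum of λ₀ ∈ ℝ such that q - λ₀ belongs to the Bernstein cone Σ≥_2 equals -1/2. In particular, q + 1/2 ∈ Σ≥_2 with decomposition q(θ) + 1/2 = (1/2)(1-θ₁-θ₂)² + θ₂(1-θ₁-θ₂) + (3/2)θ₂² + θ₁(1-θ₁-θ₂) + (3/2)θ₁², and for any λ₀ > -1/2, q - λ₀ ∉ Σ≥_2. -/
open MvPolynomial

lemma kvIdxEq_two : kvIdxEq 2 2 =
    {![2,0,0], ![0,2,0], ![0,0,2], ![1,1,0], ![1,0,1], ![0,1,1]} := by decide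

lemma kvGen_eq (a b c : ℕ) :
    kvGen 2 ![a,b,c] = X 0 ^ a * X 1 ^ b * (1 - (X 0 + X 1)) ^ c := by
  simp [kvGen, Fin.prod_univ_two, Fin.sum_univ_two, Fin.last]

lemma sum6 (u : (Fin 3 → ℕ) → ℝ) :
    ∑ α ∈ kvIdxEq 2 2, C (u α) * kvGen 2 α =
      C (u ![2,0,0]) * kvGen 2 ![2,0,0] + C (u ![0,2,0]) * kvGen 2 ![0,2,0] +
      C (u ![0,0,2]) * kvGen 2 ![0,0,2] + C (u ![1,1,0]) * kvGen 2 ![1,1,0] +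
      C (u ![1,0,1]) * kvGen 2 ![1,0,1] + C (u ![0,1,1]) * kvGen 2 ![0,1,1] := by
  rw [kvIdxEq_two, Finset.sum_insert (by decide), Finset.sum_insert (by decide),
    Finset.sum_insert (by decide), Finset.sum_insert (by decide),
    Finset.sum_insert (by decide), Finset.sum_singleton]
  ring

lemma not_mem (l : ℝ) (hl : -(1/2) < l) :
    (X 0 ^ 2 - X 0 * X 1 + X 1 ^ 2 - C l : MvPolynomial (Fin 2) ℝ) ∉ coneEq 2 2 := by
  rintro ⟨u, hu, heq⟩
  rw [sum6] at heq
  have h1 := congrArg (eval ![(1:ℝ), 0]) heq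
  have h2 := congrArg (eval ![(0:ℝ), 1]) heq
  have h3 := congrArg (eval ![(1/2 : ℝ), 1/2]) heq
  simp only [kvGen_eq, map_add, map_sub, map_mul, map_pow, eval_C, eval_X, map_one, eval_add, eval_sub] at h1 h2 h3
  norm_num [Matrix.cons_val_zero, Matrix.cons_val_one, Matrix.head_cons] at h1 h2 h3
  have := hu ![1,1,0]
  nlinarith [hu ![1,1,0], hu ![2,0,0], hu ![0,2,0]]

/-- the supremum of `λ₀` with `q - λ₀ ∈ Σ≥_2` is `-1/2` (it is
attained, i.e. it is the greatest element), with the explicit decomposition of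
`q + 1/2`, and `q - λ₀ ∉ Σ≥_2` for every `λ₀ > -1/2`. -/
theorem stmt11 :
    IsGreatest {l : ℝ |
        (X 0 ^ 2 - X 0 * X 1 + X 1 ^ 2 - C l : MvPolynomial (Fin 2) ℝ) ∈ coneEq 2 2}
      (-(1/2)) ∧
    (X 0 ^ 2 - X 0 * X 1 + X 1 ^ 2 + C (1/2) : MvPolynomial (Fin 2) ℝ) =
      C (1/2) * (1 - X 0 - X 1) ^ 2 + X 1 * (1 - X 0 - X 1) + C (3/2) * X 1 ^ 2 +
        X 0 * (1 - X 0 - X 1) + C (3/2) * X 0 ^ 2 ∧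
    (∀ l : ℝ, -(1/2) < l →
      (X 0 ^ 2 - X 0 * X 1 + X 1 ^ 2 - C l : MvPolynomial (Fin 2) ℝ) ∉ coneEq 2 2) := by
  refine ⟨⟨?_, ?_⟩, ?_, fun l hl => not_mem l hl⟩
  · -- membership at l = -(1/2)
    refine ⟨fun α => if α 0 = 2 then 3/2 else if α 1 = 2 then 3/2 else
      if α 2 = 2 then 1/2 else if α 2 = 0 then 0 else 1, fun α => ?_, ?_⟩
    · dsimp only; split_ifs <;> norm_num
    · rw [sum6]
      norm_num [kvGen_eq, Matrix.cons_val_zero, Matrix.cons_val_one, Matrix.head_cons, Matrix.cons_val_two, Matrix.tail_cons]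
      rw [show (C (3/2) : MvPolynomial (Fin 2) ℝ) = 3 * C (1/2) from by
        rw [← map_ofNat (C : ℝ →+* MvPolynomial (Fin 2) ℝ) 3, ← map_mul]; norm_num]
      have hC : (C (1/2) : MvPolynomial (Fin 2) ℝ) * 2 = 1 := by
        rw [← map_ofNat (C : ℝ →+* MvPolynomial (Fin 2) ℝ) 2, ← map_mul]; norm_num
      linear_combination (X 0 + X 1 - 2*X 0^2 - 2*X 1^2 - X 0*X 1) * hC
  · -- upper bound
    intro l hlmem
    by_contra h
    exact not_mem l (by linarith [not_le.mp h]) hlmem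
  · -- explicit identity
    rw [show (C (3/2) : MvPolynomial (Fin 2) ℝ) = 3 * C (1/2) from by
      rw [← map_ofNat (C : ℝ →+* MvPolynomial (Fin 2) ℝ) 3, ← map_mul]; norm_num]
    have hC : (C (1/2) : MvPolynomial (Fin 2) ℝ) * 2 = 1 := by
      rw [← map_ofNat (C : ℝ →+* MvPolynomial (Fin 2) ℝ) 2, ← map_mul]; norm_num
    linear_combination (X 0 + X 1 - 2*X 0^2 - 2*X 1^2 - X 0*X 1) * hC
end

section
/- The polynomial q(θ₁,θ₂) = θ₁² - θ₁θ₂ + θ₂² does not belong to the Bernstein cone Σ≥_d for any degree d ≥ 2; that is, for every d, q cannot be written as Σ_{α ∈ ℕ³, |α| = d} u_α θ₁^{α₁} θ₂^{α₂} (1-θ₁-θ₂)^{α₃} with all u_α ≥ 0. -/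
open MvPolynomial

lemma coeff012 (r : ℝ) (c : ℕ) :
    ((1 - Polynomial.C r * Polynomial.X : Polynomial ℝ) ^ c).coeff 0 = 1 ∧
    ((1 - Polynomial.C r * Polynomial.X : Polynomial ℝ) ^ c).coeff 1 = -(c : ℝ) * r ∧
    ((1 - Polynomial.C r * Polynomial.X : Polynomial ℝ) ^ c).coeff 2 = (c.choose 2 : ℝ) * r ^ 2 := by
  induction c with
  | zero => simp [Polynomial.coeff_one]
  | succ c ih =>
    obtain ⟨h0, h1, h2⟩ := ih
    have key : (1 - Polynomial.C r * Polynomial.X : Polynomial ℝ) ^ (c+1)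
        = (1 - Polynomial.C r * Polynomial.X) ^ c
          - Polynomial.C r * ((1 - Polynomial.C r * Polynomial.X) ^ c * Polynomial.X) := by ring
    have hx : ∀ k, ((1 - Polynomial.C r * Polynomial.X : Polynomial ℝ) ^ c * Polynomial.X).coeff k
        = if 1 ≤ k then
            ((1 - Polynomial.C r * Polynomial.X : Polynomial ℝ) ^ c).coeff (k - 1) else 0 := by
      intro k
      rw [← pow_one (Polynomial.X : Polynomial ℝ), Polynomial.coeff_mul_X_pow']
    refine ⟨?_, ?_, ?_⟩ <;>
      rw [key] <;>
      simp only [Polynomial.coeff_sub, Polynomial.coeff_C_mul, hx, h0, h1, h2] <;> norm_num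
    · push_cast [Nat.choose_succ_succ, Nat.choose_one_right]; ring
    · push_cast [Nat.choose_succ_succ c 1, Nat.choose_one_right]; ring

lemma cf1 (c : ℕ) :
    ((1 - Polynomial.X : Polynomial ℝ) ^ c).coeff 0 = 1 ∧
    ((1 - Polynomial.X : Polynomial ℝ) ^ c).coeff 1 = -(c : ℝ) ∧
    ((1 - Polynomial.X : Polynomial ℝ) ^ c).coeff 2 = (c.choose 2 : ℝ) := by
  have := coeff012 1 c
  simpa using this

lemma cf2 (c : ℕ) :
    ((1 - 2 * Polynomial.X : Polynomial ℝ) ^ c).coeff 0 = 1 ∧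
    ((1 - 2 * Polynomial.X : Polynomial ℝ) ^ c).coeff 1 = -(c : ℝ) * 2 ∧
    ((1 - 2 * Polynomial.X : Polynomial ℝ) ^ c).coeff 2 = (c.choose 2 : ℝ) * 4 := by
  have := coeff012 2 c
  rw [show (Polynomial.C (2:ℝ)) = 2 from map_ofNat _ 2] at this
  convert this using 3 <;> norm_num

lemma coeffXp (P : Polynomial ℝ) (a k : ℕ) :
    ((Polynomial.X : Polynomial ℝ) ^ a * P).coeff k = if a ≤ k then P.coeff (k - a) else 0 :=
  Polynomial.coeff_X_pow_mul' P a k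

lemma eq_vec {α : Fin 3 → ℕ} {x y z : ℕ} (h0 : α 0 = x) (h1 : α 1 = y) (h2 : α 2 = z) :
    α = ![x, y, z] := by
  funext i; fin_cases i <;> simp [h0, h1, h2]

lemma ne0 {a b : Fin 3 → ℕ} (h : a 0 ≠ b 0) : a ≠ b := fun e => h (congrFun e 0)
lemma ne1 {a b : Fin 3 → ℕ} (h : a 1 ≠ b 1) : a ≠ b := fun e => h (congrFun e 1)

lemma coeffX1 (P : Polynomial ℝ) (k : ℕ) :
    ((Polynomial.X : Polynomial ℝ) * P).coeff k = if 1 ≤ k then P.coeff (k - 1) else 0 := by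
  rw [← pow_one (Polynomial.X : Polynomial ℝ)]; exact coeffXp P 1 k

section kvlemmas
open MvPolynomial

lemma aeval_kvGen (p₀ p₁ : Polynomial ℝ) (α : Fin 3 → ℕ) :
    aeval ![p₀, p₁] (kvGen 2 α) =
      p₀ ^ α 0 * p₁ ^ α 1 * (1 - (p₀ + p₁)) ^ α 2 := by
  simp [kvGen, Fin.prod_univ_two, Fin.sum_univ_two]

lemma mem_kvIdxEq (d : ℕ) (α : Fin 3 → ℕ) :
    α ∈ kvIdxEq 2 d ↔ α 0 + α 1 + α 2 = d := by
  have hsum : ∑ i, α i = α 0 + α 1 + α 2 := Fin.sum_univ_three α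
  simp only [kvIdxEq, Finset.mem_filter, Fintype.mem_piFinset, Finset.mem_range, hsum]
  exact ⟨fun h => h.2, fun h => ⟨fun i => by fin_cases i <;> simp <;> omega, h⟩⟩

lemma sum_reduce (d : ℕ) (hd : 2 ≤ d) (f : (Fin 3 → ℕ) → ℝ)
    (hf : ∀ α : Fin 3 → ℕ, α 0 + α 1 + α 2 = d → 2 < α 0 + α 1 → f α = 0) :
    ∑ α ∈ kvIdxEq 2 d, f α =
      f ![0,0,d] + f ![1,0,d-1] + f ![0,1,d-1] + f ![2,0,d-2] + f ![1,1,d-2] + f ![0,2,d-2] := by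
  have hT : ({![0,0,d], ![1,0,d-1], ![0,1,d-1], ![2,0,d-2], ![1,1,d-2], ![0,2,d-2]} :
      Finset (Fin 3 → ℕ)) ⊆ kvIdxEq 2 d := by
    intro α hα
    rw [mem_kvIdxEq]
    simp only [Finset.mem_insert, Finset.mem_singleton] at hα
    rcases hα with h|h|h|h|h|h <;> subst h <;> simp <;> omega
  rw [← Finset.sum_subset hT]
  · rw [Finset.sum_insert, Finset.sum_insert, Finset.sum_insert, Finset.sum_insert,
      Finset.sum_insert, Finset.sum_singleton]
    · ring
    all_goals simp only [Finset.mem_insert, Finset.mem_singleton]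
    all_goals push_neg
    · exact ne0 (by norm_num)
    · exact ⟨ne0 (by norm_num), ne0 (by norm_num)⟩
    · exact ⟨ne0 (by norm_num), ne0 (by norm_num), ne1 (by norm_num)⟩
    · exact ⟨ne0 (by norm_num), ne0 (by norm_num), ne1 (by norm_num), ne0 (by norm_num)⟩
    · exact ⟨ne0 (by norm_num), ne1 (by norm_num), ne0 (by norm_num), ne0 (by norm_num),
        ne1 (by norm_num)⟩
  · intro α hα hnT
    rw [mem_kvIdxEq] at hα
    refine hf α hα ?_
    by_contra hle
    push_neg at hle
    apply hnT
    simp only [Finset.mem_insert, Finset.mem_singleton]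
    have h0 : α 0 = 0 ∨ α 0 = 1 ∨ α 0 = 2 := by omega
    have h1 : α 1 = 0 ∨ α 1 = 1 ∨ α 1 = 2 := by omega
    rcases h0 with h0|h0|h0 <;> rcases h1 with h1|h1|h1 <;>
      [ exact Or.inl (eq_vec h0 h1 (by omega));
        exact Or.inr (Or.inr (Or.inl (eq_vec h0 h1 (by omega))));
        exact Or.inr (Or.inr (Or.inr (Or.inr (Or.inr (eq_vec h0 h1 (by omega))))));
        exact Or.inr (Or.inl (eq_vec h0 h1 (by omega)));
        exact Or.inr (Or.inr (Or.inr (Or.inr (Or.inl (eq_vec h0 h1 (by omega))))));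
        omega;
        exact Or.inr (Or.inr (Or.inr (Or.inl (eq_vec h0 h1 (by omega)))));
        omega;
        omega]

lemma vanishA (k : ℕ) (hk : k ≤ 2) (α : Fin 3 → ℕ) (h3 : 2 < α 0 + α 1) :
    ((aeval ![(Polynomial.X : Polynomial ℝ), 0]) (kvGen 2 α)).coeff k = 0 := by
  rw [aeval_kvGen]
  rcases Nat.eq_zero_or_pos (α 1) with hb | hb
  · rw [hb]
    simp only [pow_zero, mul_one, add_zero]
    rw [coeffXp, if_neg (by omega)]
  · rw [zero_pow hb.ne', mul_zero, zero_mul, Polynomial.coeff_zero]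

lemma vanishB (k : ℕ) (hk : k ≤ 2) (α : Fin 3 → ℕ) (h3 : 2 < α 0 + α 1) :
    ((aeval ![0, (Polynomial.X : Polynomial ℝ)]) (kvGen 2 α)).coeff k = 0 := by
  rw [aeval_kvGen]
  rcases Nat.eq_zero_or_pos (α 0) with ha | ha
  · rw [ha]
    simp only [pow_zero, one_mul, zero_add]
    rw [coeffXp, if_neg (by omega)]
  · rw [zero_pow ha.ne', zero_mul, zero_mul, Polynomial.coeff_zero]

lemma vanishC (k : ℕ) (hk : k ≤ 2) (α : Fin 3 → ℕ) (h3 : 2 < α 0 + α 1) :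
    ((aeval ![(Polynomial.X : Polynomial ℝ), Polynomial.X]) (kvGen 2 α)).coeff k = 0 := by
  rw [aeval_kvGen, ← pow_add]
  rw [coeffXp, if_neg (by omega)]

end kvlemmas

/-- `q = θ₁² - θ₁θ₂ + θ₂²` does not belong to the Bernstein cone
`Σ≥_d` (combinations over `|α| = d`) for any degree `d ≥ 2`. -/
theorem stmt12 (d : ℕ) (hd : 2 ≤ d) :
    (X 0 ^ 2 - X 0 * X 1 + X 1 ^ 2 : MvPolynomial (Fin 2) ℝ) ∉ coneEq 2 d := by
  rintro ⟨u, hu, hq⟩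
  have E : ∀ (p₀ p₁ : Polynomial ℝ) (k : ℕ),
      ((aeval ![p₀, p₁]) ((X 0 : MvPolynomial (Fin 2) ℝ) ^ 2 - X 0 * X 1 + X 1 ^ 2)).coeff k
        = ∑ α ∈ kvIdxEq 2 d, u α * ((aeval ![p₀, p₁]) (kvGen 2 α)).coeff k := by
    intro p₀ p₁ k
    rw [hq, map_sum, Polynomial.finset_sum_coeff]
    refine Finset.sum_congr rfl fun α _ => ?_
    rw [map_mul, aeval_C, Polynomial.algebraMap_eq, Polynomial.coeff_C_mul]
  have tA : ∀ x y z : ℕ, (aeval ![(Polynomial.X : Polynomial ℝ), 0]) (kvGen 2 ![x, y, z])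
      = Polynomial.X ^ x * 0 ^ y * (1 - Polynomial.X) ^ z := by
    intro x y z; rw [aeval_kvGen, add_zero]; simp
  have tB : ∀ x y z : ℕ, (aeval ![0, (Polynomial.X : Polynomial ℝ)]) (kvGen 2 ![x, y, z])
      = 0 ^ x * Polynomial.X ^ y * (1 - Polynomial.X) ^ z := by
    intro x y z; rw [aeval_kvGen, zero_add]; simp
  have tC : ∀ x y z : ℕ, (aeval ![(Polynomial.X : Polynomial ℝ), Polynomial.X]) (kvGen 2 ![x, y, z])
      = Polynomial.X ^ (x + y) * (1 - 2 * Polynomial.X) ^ z := by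
    intro x y z; rw [aeval_kvGen, ← pow_add, two_mul]; simp
  have LA : (aeval ![(Polynomial.X : Polynomial ℝ), 0])
      ((X 0 : MvPolynomial (Fin 2) ℝ) ^ 2 - X 0 * X 1 + X 1 ^ 2) = Polynomial.X ^ 2 := by
    simp
  have LB : (aeval ![0, (Polynomial.X : Polynomial ℝ)])
      ((X 0 : MvPolynomial (Fin 2) ℝ) ^ 2 - X 0 * X 1 + X 1 ^ 2) = Polynomial.X ^ 2 := by
    simp
  have LC : (aeval ![(Polynomial.X : Polynomial ℝ), Polynomial.X])
      ((X 0 : MvPolynomial (Fin 2) ℝ) ^ 2 - X 0 * X 1 + X 1 ^ 2) = Polynomial.X ^ 2 := by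
    simp; ring
  -- Equation A, k = 0 : u ![0,0,d] = 0
  have hB0 : u ![0, 0, d] = 0 := by
    have h := E Polynomial.X 0 0
    rw [LA, sum_reduce d hd _ (fun α hs h3 => by rw [vanishA 0 (by norm_num) α h3, mul_zero])] at h
    simp only [tA] at h
    norm_num [coeffXp, coeffX1, (cf1 d).1] at h
    linarith
  -- Equation A, k = 1 : u ![1,0,d-1] = 0
  have hB1 : u ![1, 0, d - 1] = 0 := by
    have h := E Polynomial.X 0 1
    rw [LA, sum_reduce d hd _ (fun α hs h3 => by rw [vanishA 1 (by norm_num) α h3, mul_zero])] at h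
    simp only [tA] at h
    rw [hB0] at h
    norm_num [coeffXp, coeffX1, (cf1 d).2.1, (cf1 (d-1)).1] at h
    linarith
  -- Equation B, k = 1 : u ![0,1,d-1] = 0
  have hB2 : u ![0, 1, d - 1] = 0 := by
    have h := E 0 Polynomial.X 1
    rw [LB, sum_reduce d hd _ (fun α hs h3 => by rw [vanishB 1 (by norm_num) α h3, mul_zero])] at h
    simp only [tB] at h
    rw [hB0] at h
    norm_num [coeffXp, coeffX1, (cf1 d).2.1, (cf1 (d-1)).1] at h
    linarith
  -- Equation A, k = 2 : u ![2,0,d-2] = 1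
  have hG1 : u ![2, 0, d - 2] = 1 := by
    have h := E Polynomial.X 0 2
    rw [LA, sum_reduce d hd _ (fun α hs h3 => by rw [vanishA 2 (by norm_num) α h3, mul_zero])] at h
    simp only [tA] at h
    rw [hB0, hB1] at h
    norm_num [coeffXp, coeffX1, (cf1 d).2.2, (cf1 (d-1)).2.1, (cf1 (d-2)).1] at h
    linarith
  -- Equation B, k = 2 : u ![0,2,d-2] = 1
  have hG2 : u ![0, 2, d - 2] = 1 := by
    have h := E 0 Polynomial.X 2
    rw [LB, sum_reduce d hd _ (fun α hs h3 => by rw [vanishB 2 (by norm_num) α h3, mul_zero])] at h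
    simp only [tB] at h
    rw [hB0, hB2] at h
    norm_num [coeffXp, coeffX1, (cf1 d).2.2, (cf1 (d-1)).2.1, (cf1 (d-2)).1] at h
    linarith
  -- Equation C, k = 2 : u ![1,1,d-2] = -1, contradiction
  have h := E Polynomial.X Polynomial.X 2
  rw [LC, sum_reduce d hd _ (fun α hs h3 => by rw [vanishC 2 (by norm_num) α h3, mul_zero])] at h
  simp only [tC] at h
  rw [hB0, hB1, hB2, hG1, hG2] at h
  norm_num [coeffXp, coeffX1, (cf2 d).2.2, (cf2 (d-1)).2.1, (cf2 (d-2)).1] at h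
  linarith [hu ![1, 1, d - 2]]
end

section
/- There exists a linear functional L on the space of polynomials of degree at most 2 in three variables θ₁, θ₂, θ₃, defined on monomials by L(1)=1, L(θ₁)=1/3, L(θ₂)=1/6, L(θ₃)=1/6, L(θ₁²)=1/3, L(θ₂²)=0, L(θ₃²)=0, L(θ₁θ₂)=0, L(θ₁θ₃)=0, L(θ₂θ₃)=1/6, such that L(p) ≥ 0 for every polynomial p in the Bernstein cone Σ≥_2 (n = 3, d = 2), i.e., L assigns nonnegative value to every product θ₁^{α₁}θ₂^{α₂}θ₃^{α₃}(1-θ₁-θ₂-θ₃)^{α₄} with α₁+α₂+α₃+α₄ = 2. -/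
open MvPolynomial

/-! ### Auxiliary construction of the linear functional -/

/-- Values of the functional on monomials (exponents of `θ₁, θ₂, θ₃`). -/
noncomputable def vf : ℕ → ℕ → ℕ → ℝ
  | 0,0,0 => 1
  | 1,0,0 => 1/3
  | 0,1,0 => 1/6
  | 0,0,1 => 1/6
  | 2,0,0 => 1/3
  | 0,1,1 => 1/6
  | _,_,_ => 0

/-- Values as a function on exponent finsupps. -/
noncomputable def vv (d : Fin 3 →₀ ℕ) : ℝ := vf (d 0) (d 1) (d 2)

/-- The linear functional, defined via the monomial basis. -/
noncomputable def Lmap : MvPolynomial (Fin 3) ℝ →ₗ[ℝ] ℝ :=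
  (MvPolynomial.basisMonomials (Fin 3) ℝ).constr ℝ vv

lemma Lmono (d : Fin 3 →₀ ℕ) (c : ℝ) : Lmap (monomial d c) = c * vv d := by
  have h1 : Lmap (monomial d 1) = vv d := by
    have := (MvPolynomial.basisMonomials (Fin 3) ℝ).constr_basis ℝ vv d
    rwa [show (MvPolynomial.basisMonomials (Fin 3) ℝ) d = monomial d 1 from
      congrFun (coe_basisMonomials (Fin 3) ℝ) d] at this
  have h2 : monomial d c = c • monomial d 1 := by
    rw [smul_monomial, smul_eq_mul, mul_one]
  rw [h2, map_smul, h1, smul_eq_mul]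

lemma mono3 (a b c : ℕ) : (X 0 : MvPolynomial (Fin 3) ℝ)^a * X 1^b * X 2^c
    = monomial (Finsupp.single 0 a + Finsupp.single 1 b + Finsupp.single 2 c) 1 := by
  simp [X_pow_eq_monomial, monomial_mul]

lemma LX3 (a b c : ℕ) : Lmap ((X 0:MvPolynomial (Fin 3) ℝ)^a * X 1^b * X 2^c) = vf a b c := by
  rw [mono3, Lmono, one_mul]
  simp [vv, Finsupp.add_apply, Finsupp.single_apply, Fin.ext_iff]

lemma LCmul (r : ℝ) (p : MvPolynomial (Fin 3) ℝ) : Lmap (C r * p) = r * Lmap p := by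
  rw [C_mul', map_smul, smul_eq_mul]

lemma genval (a b c e : ℕ) (ha : a < 3) (hb : b < 3) (hc : c < 3) (he : e < 3)
    (h : a + b + c + e = 2) :
    0 ≤ Lmap ((X 0:MvPolynomial (Fin 3) ℝ)^a * X 1^b * X 2^c * (1 - (X 0 + X 1 + X 2))^e) := by
  interval_cases a <;> interval_cases b <;> interval_cases c <;> interval_cases e <;> try omega
  · -- (0,0,0,2): s^2
    rw [show (X 0:MvPolynomial (Fin 3) ℝ)^0*X 1^0*X 2^0*(1 - (X 0 + X 1 + X 2))^2 =
      X 0^0*X 1^0*X 2^0 - X 0^1*X 1^0*X 2^0 - X 0^1*X 1^0*X 2^0 - X 0^0*X 1^1*X 2^0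
      - X 0^0*X 1^1*X 2^0 - X 0^0*X 1^0*X 2^1 - X 0^0*X 1^0*X 2^1
      + X 0^2*X 1^0*X 2^0 + X 0^0*X 1^2*X 2^0 + X 0^0*X 1^0*X 2^2
      + X 0^1*X 1^1*X 2^0 + X 0^1*X 1^1*X 2^0 + X 0^1*X 1^0*X 2^1 + X 0^1*X 1^0*X 2^1
      + X 0^0*X 1^1*X 2^1 + X 0^0*X 1^1*X 2^1 from by ring]
    simp only [map_sub, map_add, LX3]
    norm_num [vf]
  · -- (0,0,1,1): X2 * s
    rw [show (X 0:MvPolynomial (Fin 3) ℝ)^0*X 1^0*X 2^1*(1 - (X 0 + X 1 + X 2))^1 =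
      X 0^0*X 1^0*X 2^1 - X 0^1*X 1^0*X 2^1 - X 0^0*X 1^1*X 2^1 - X 0^0*X 1^0*X 2^2 from by ring]
    simp only [map_sub, LX3]
    norm_num [vf]
  · -- (0,0,2,0): X2^2
    rw [show (X 0:MvPolynomial (Fin 3) ℝ)^0*X 1^0*X 2^2*(1 - (X 0 + X 1 + X 2))^0 =
      X 0^0*X 1^0*X 2^2 from by ring]
    rw [LX3]; norm_num [vf]
  · -- (0,1,0,1)
    rw [show (X 0:MvPolynomial (Fin 3) ℝ)^0*X 1^1*X 2^0*(1 - (X 0 + X 1 + X 2))^1 =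
      X 0^0*X 1^1*X 2^0 - X 0^1*X 1^1*X 2^0 - X 0^0*X 1^2*X 2^0 - X 0^0*X 1^1*X 2^1 from by ring]
    simp only [map_sub, LX3]
    norm_num [vf]
  · -- (0,1,1,0)
    rw [show (X 0:MvPolynomial (Fin 3) ℝ)^0*X 1^1*X 2^1*(1 - (X 0 + X 1 + X 2))^0 =
      X 0^0*X 1^1*X 2^1 from by ring]
    rw [LX3]; norm_num [vf]
  · -- (0,2,0,0)
    rw [show (X 0:MvPolynomial (Fin 3) ℝ)^0*X 1^2*X 2^0*(1 - (X 0 + X 1 + X 2))^0 =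
      X 0^0*X 1^2*X 2^0 from by ring]
    rw [LX3]; norm_num [vf]
  · -- (1,0,0,1)
    rw [show (X 0:MvPolynomial (Fin 3) ℝ)^1*X 1^0*X 2^0*(1 - (X 0 + X 1 + X 2))^1 =
      X 0^1*X 1^0*X 2^0 - X 0^2*X 1^0*X 2^0 - X 0^1*X 1^1*X 2^0 - X 0^1*X 1^0*X 2^1 from by ring]
    simp only [map_sub, LX3]
    norm_num [vf]
  · -- (1,0,1,0)
    rw [show (X 0:MvPolynomial (Fin 3) ℝ)^1*X 1^0*X 2^1*(1 - (X 0 + X 1 + X 2))^0 =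
      X 0^1*X 1^0*X 2^1 from by ring]
    rw [LX3]; norm_num [vf]
  · -- (1,1,0,0)
    rw [show (X 0:MvPolynomial (Fin 3) ℝ)^1*X 1^1*X 2^0*(1 - (X 0 + X 1 + X 2))^0 =
      X 0^1*X 1^1*X 2^0 from by ring]
    rw [LX3]; norm_num [vf]
  · -- (2,0,0,0)
    rw [show (X 0:MvPolynomial (Fin 3) ℝ)^2*X 1^0*X 2^0*(1 - (X 0 + X 1 + X 2))^0 =
      X 0^2*X 1^0*X 2^0 from by ring]
    rw [LX3]; norm_num [vf]

lemma kvGen3 (α : Fin 4 → ℕ) : kvGen 3 α =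
    X 0 ^ α 0 * X 1 ^ α 1 * X 2 ^ α 2 * (1 - (X 0 + X 1 + X 2)) ^ α 3 := by
  simp [kvGen, Fin.prod_univ_three, Fin.sum_univ_three, mul_assoc]

lemma memkv (α : Fin 4 → ℕ) (h : α ∈ kvIdxEq 3 2) :
    α 0 < 3 ∧ α 1 < 3 ∧ α 2 < 3 ∧ α 3 < 3 ∧ α 0 + α 1 + α 2 + α 3 = 2 := by
  simp [kvIdxEq, Fintype.mem_piFinset, Fin.sum_univ_four] at h
  exact ⟨h.1 0, h.1 1, h.1 2, h.1 3, h.2⟩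

/-- existence of the coin-state linear functional `L` on
polynomials in `θ₁,θ₂,θ₃`, nonnegative on the Bernstein cone `Σ≥_2` (n = 3). -/
theorem stmt13 :
    ∃ L : MvPolynomial (Fin 3) ℝ →ₗ[ℝ] ℝ,
      L 1 = 1 ∧ L (X 0) = 1/3 ∧ L (X 1) = 1/6 ∧ L (X 2) = 1/6 ∧
      L (X 0 ^ 2) = 1/3 ∧ L (X 1 ^ 2) = 0 ∧ L (X 2 ^ 2) = 0 ∧
      L (X 0 * X 1) = 0 ∧ L (X 0 * X 2) = 0 ∧ L (X 1 * X 2) = 1/6 ∧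
      (∀ p ∈ coneEq 3 2, 0 ≤ L p) := by
  refine ⟨Lmap, ?_, ?_, ?_, ?_, ?_, ?_, ?_, ?_, ?_, ?_, ?_⟩
  · rw [show (1:MvPolynomial (Fin 3) ℝ) = X 0^0*X 1^0*X 2^0 from by ring, LX3]; norm_num [vf]
  · rw [show (X 0:MvPolynomial (Fin 3) ℝ) = X 0^1*X 1^0*X 2^0 from by ring, LX3]; norm_num [vf]
  · rw [show (X 1:MvPolynomial (Fin 3) ℝ) = X 0^0*X 1^1*X 2^0 from by ring, LX3]; norm_num [vf]
  · rw [show (X 2:MvPolynomial (Fin 3) ℝ) = X 0^0*X 1^0*X 2^1 from by ring, LX3]; norm_num [vf]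
  · rw [show (X 0^2:MvPolynomial (Fin 3) ℝ) = X 0^2*X 1^0*X 2^0 from by ring, LX3]; norm_num [vf]
  · rw [show (X 1^2:MvPolynomial (Fin 3) ℝ) = X 0^0*X 1^2*X 2^0 from by ring, LX3]; norm_num [vf]
  · rw [show (X 2^2:MvPolynomial (Fin 3) ℝ) = X 0^0*X 1^0*X 2^2 from by ring, LX3]; norm_num [vf]
  · rw [show (X 0*X 1:MvPolynomial (Fin 3) ℝ) = X 0^1*X 1^1*X 2^0 from by ring, LX3]; norm_num [vf]
  · rw [show (X 0*X 2:MvPolynomial (Fin 3) ℝ) = X 0^1*X 1^0*X 2^1 from by ring, LX3]; norm_num [vf]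
  · rw [show (X 1*X 2:MvPolynomial (Fin 3) ℝ) = X 0^0*X 1^1*X 2^1 from by ring, LX3]; norm_num [vf]
  · rintro p ⟨u, hu, rfl⟩
    rw [map_sum]
    refine Finset.sum_nonneg fun α hα => ?_
    rw [LCmul]
    obtain ⟨h0, h1, h2, h3, hsum⟩ := memkv α hα
    refine mul_nonneg (hu α) ?_
    rw [kvGen3]
    exact genval _ _ _ _ h0 h1 h2 h3 hsum
end

section
/- Let L be the linear functional with moments L(1)=1, L(θ₁)=1/3, L(θ₂)=1/6, L(θ₃)=1/6, L(θ₁²)=1/3, L(θ₂²)=0, L(θ₃²)=0, L(θ₁θ₂)=0, L(θ₁θ₃)=0, L(θ₂θ₃)=1/6. For q(θ) = -(θ₁+θ₂)² - (θ₁+θ₃)(1 - 2θ₁ - 2θ₂) - ε with 0 < ε ≤ 1/6, one has L(q) = 1/6 - ε ≥ 0, even though q < 0 everywhere on the probability simplex. Hence L cannot be represented by any finitely additive probability measure on the simplex (no classical probability μ satisfies L(p) = ∫ p dμ for all polynomials p of degree ≤ 2). -/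
open MvPolynomial


private lemma key_decomp (e : ℝ) :
    (-(X 0 + X 1) ^ 2 - (X 0 + X 2) * (1 - 2 * X 0 - 2 * X 1) - C e :
      MvPolynomial (Fin 3) ℝ) =
    X 0 ^ 2 + (-1 : ℝ) • X 1 ^ 2 + (2 : ℝ) • (X 0 * X 2) + (2 : ℝ) • (X 1 * X 2)
      + (-1 : ℝ) • X 0 + (-1 : ℝ) • X 2 + (-e) • (1 : MvPolynomial (Fin 3) ℝ) := by
  simp only [smul_eq_C_mul, map_neg, map_one, map_ofNat]
  ring

private lemma val_of (e : ℝ) (J : MvPolynomial (Fin 3) ℝ →ₗ[ℝ] ℝ)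
    (h1 : J 1 = 1) (hx : J (X 0) = 1/3) (hz : J (X 2) = 1/6)
    (hxx : J (X 0 ^ 2) = 1/3) (hyy : J (X 1 ^ 2) = 0)
    (hxz : J (X 0 * X 2) = 0) (hyz : J (X 1 * X 2) = 1/6) :
    J (-(X 0 + X 1) ^ 2 - (X 0 + X 2) * (1 - 2 * X 0 - 2 * X 1) - C e) = 1/6 - e := by
  rw [key_decomp]
  simp only [map_add, map_smul, smul_eq_mul, h1, hx, hz, hxx, hyy, hxz, hyz]
  ring

/-- with the coin-state moments, `L q = 1/6 - ε ≥ 0` for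
`q = -(θ₁+θ₂)² - (θ₁+θ₃)(1-2θ₁-2θ₂) - ε` and `0 < ε ≤ 1/6`, even though `q` is
negative everywhere on the probability simplex.  Consequently `L` is not
representable by any (finitely additive) probability on the simplex: there is no
normalized monotone (i.e. nonnegative on simplex-nonnegative polynomials)
linear functional — such as integration against a finitely additive probability
measure — agreeing with `L` on all polynomials of degree ≤ 2. -/
theorem stmt15 (L : MvPolynomial (Fin 3) ℝ →ₗ[ℝ] ℝ)
    (h1 : L 1 = 1) (hx : L (X 0) = 1/3) (hy : L (X 1) = 1/6) (hz : L (X 2) = 1/6)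
    (hxx : L (X 0 ^ 2) = 1/3) (hyy : L (X 1 ^ 2) = 0) (hzz : L (X 2 ^ 2) = 0)
    (hxy : L (X 0 * X 1) = 0) (hxz : L (X 0 * X 2) = 0) (hyz : L (X 1 * X 2) = 1/6)
    (e : ℝ) (he0 : 0 < e) (he1 : e ≤ 1/6) :
    L (-(X 0 + X 1) ^ 2 - (X 0 + X 2) * (1 - 2 * X 0 - 2 * X 1) - C e) = 1/6 - e ∧
    0 ≤ L (-(X 0 + X 1) ^ 2 - (X 0 + X 2) * (1 - 2 * X 0 - 2 * X 1) - C e) ∧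
    (∀ θ : Fin 3 → ℝ, (∀ i, 0 ≤ θ i) → θ 0 + θ 1 + θ 2 ≤ 1 →
      eval θ (-(X 0 + X 1) ^ 2 - (X 0 + X 2) * (1 - 2 * X 0 - 2 * X 1) - C e :
        MvPolynomial (Fin 3) ℝ) < 0) ∧
    ¬ ∃ I : MvPolynomial (Fin 3) ℝ →ₗ[ℝ] ℝ, I 1 = 1 ∧
        (∀ p : MvPolynomial (Fin 3) ℝ,
          (∀ θ : Fin 3 → ℝ, (∀ i, 0 ≤ θ i) → θ 0 + θ 1 + θ 2 ≤ 1 → 0 ≤ eval θ p) →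
          0 ≤ I p) ∧
        (∀ p : MvPolynomial (Fin 3) ℝ, p.totalDegree ≤ 2 → I p = L p) := by
  have hLQ := val_of e L h1 hx hz hxx hyy hxz hyz
  have hqneg : ∀ θ : Fin 3 → ℝ, (∀ i, 0 ≤ θ i) → θ 0 + θ 1 + θ 2 ≤ 1 →
      eval θ (-(X 0 + X 1) ^ 2 - (X 0 + X 2) * (1 - 2 * X 0 - 2 * X 1) - C e :
        MvPolynomial (Fin 3) ℝ) < 0 := by
    intro θ hθ hs
    have h0 := hθ 0; have h1' := hθ 1; have h2 := hθ 2
    simp only [map_sub, map_neg, map_add, map_mul, map_pow, map_one, eval_X, eval_C, map_ofNat]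
    nlinarith [sq_nonneg (θ 0 + θ 1 - 1), sq_nonneg (θ 0 + θ 1),
      mul_nonneg h0 h2, mul_nonneg (add_nonneg h0 h2) (add_nonneg h0 h1')]
  refine ⟨hLQ, by rw [hLQ]; linarith, hqneg, ?_⟩
  rintro ⟨I, hI1, hmono, hagree⟩
  have dX : ∀ i : Fin 3, (X i : MvPolynomial (Fin 3) ℝ).totalDegree ≤ 2 := by
    intro i; simp [totalDegree_X]
  have dXX : ∀ i j : Fin 3, (X i * X j : MvPolynomial (Fin 3) ℝ).totalDegree ≤ 2 := by
    intro i j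
    exact le_trans (totalDegree_mul _ _) (by simp [totalDegree_X])
  have dX2 : ∀ i : Fin 3, (X i ^ 2 : MvPolynomial (Fin 3) ℝ).totalDegree ≤ 2 := by
    intro i
    calc (X i ^ 2 : MvPolynomial (Fin 3) ℝ).totalDegree ≤ 2 * (X i : MvPolynomial (Fin 3) ℝ).totalDegree :=
          totalDegree_pow _ _
      _ ≤ 2 := by simp [totalDegree_X]
  have hIQ : I (-(X 0 + X 1) ^ 2 - (X 0 + X 2) * (1 - 2 * X 0 - 2 * X 1) - C e) = 1/6 - e :=
    val_of e I hI1
      (by rw [hagree _ (dX 0)]; exact hx)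
      (by rw [hagree _ (dX 2)]; exact hz)
      (by rw [hagree _ (dX2 0)]; exact hxx)
      (by rw [hagree _ (dX2 1)]; exact hyy)
      (by rw [hagree _ (dXX 0 2)]; exact hxz)
      (by rw [hagree _ (dXX 1 2)]; exact hyz)
  -- -Q - C e is pointwise nonneg on the simplex
  have hpos : 0 ≤ I (-(-(X 0 + X 1) ^ 2 - (X 0 + X 2) * (1 - 2 * X 0 - 2 * X 1) - C e) - C e) := by
    apply hmono
    intro θ hθ hs
    have h0 := hθ 0; have h1' := hθ 1; have h2 := hθ 2
    simp only [map_sub, map_neg, map_add, map_mul, map_pow, map_one, eval_X, eval_C, map_ofNat]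
    nlinarith [sq_nonneg (θ 0 + θ 1 - 1), sq_nonneg (θ 0 + θ 1),
      mul_nonneg h0 h2, mul_nonneg (add_nonneg h0 h2) (add_nonneg h0 h1')]
  have hCe : I (C e) = e := by
    have : (C e : MvPolynomial (Fin 3) ℝ) = e • 1 := by simp [smul_eq_C_mul]
    rw [this, map_smul, smul_eq_mul, hI1, mul_one]
  rw [map_sub, map_neg, hIQ, hCe] at hpos
  linarith
end

section
/- The discrete probability measure p = (1/2)δ_{a} + (1/2)δ_{b} on ℝ³, where a = ((3-√3)/6, 0, 0) and b = ((3+√3)/6, 0, 0), satisfies the marginal moment constraints ∫(θ₁+θ₂)dp = 1/2, ∫(θ₁+θ₃)dp = 1/2, ∫(θ₁+θ₂)²dp = 1/3, ∫(θ₁+θ₃)²dp = 1/3, but fails to match the full coin-state moments: ∫θ₂ dp = 0 ≠ 1/6 and ∫θ₂θ₃ dp = 0 ≠ 1/6. -/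
open MeasureTheory

lemma intdirac (f : (Fin 3 → ℝ) → ℝ) (a : Fin 3 → ℝ) :
    Integrable f (Measure.dirac a) := by
  refine (integrable_const (f a)).congr ?_
  rw [Filter.EventuallyEq, ae_dirac_eq]
  simp

lemma intmix (f : (Fin 3 → ℝ) → ℝ) (a b : Fin 3 → ℝ) :
    ∫ θ, f θ ∂((1/2 : ENNReal) • Measure.dirac a + (1/2 : ENNReal) • Measure.dirac b)
      = (f a + f b) / 2 := by
  rw [integral_add_measure ((intdirac f a).smul_measure (by norm_num))
      ((intdirac f b).smul_measure (by norm_num)),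
    integral_smul_measure, integral_smul_measure, integral_dirac, integral_dirac]
  simp
  ring

/-- the mixture of two Dirac measures at
`a = ((3-√3)/6, 0, 0)` and `b = ((3+√3)/6, 0, 0)` matches the marginal moments
of the coin state but not its full moments (`∫θ₂ = 0 ≠ 1/6`, `∫θ₂θ₃ = 0 ≠ 1/6`). -/
theorem stmt18 :
    ∀ p : Measure (Fin 3 → ℝ),
      p = (1/2 : ENNReal) • Measure.dirac (![(3 - Real.sqrt 3)/6, 0, 0]) +
          (1/2 : ENNReal) • Measure.dirac (![(3 + Real.sqrt 3)/6, 0, 0]) →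
      (∫ θ, (θ 0 + θ 1) ∂p) = 1/2 ∧
      (∫ θ, (θ 0 + θ 2) ∂p) = 1/2 ∧
      (∫ θ, (θ 0 + θ 1) ^ 2 ∂p) = 1/3 ∧
      (∫ θ, (θ 0 + θ 2) ^ 2 ∂p) = 1/3 ∧
      (∫ θ, θ 1 ∂p) = 0 ∧ (∫ θ, θ 1 ∂p) ≠ 1/6 ∧
      (∫ θ, θ 1 * θ 2 ∂p) = 0 ∧ (∫ θ, θ 1 * θ 2 ∂p) ≠ 1/6 := by
  intro p hp
  subst hp
  have hs : Real.sqrt 3 ^ 2 = 3 := Real.sq_sqrt (by norm_num)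
  simp only [intmix]
  norm_num
  constructor
  · nlinarith [hs]
  · simp only [Matrix.cons_val_two, Matrix.tail_cons, Matrix.head_cons, add_zero]
    exact ⟨by ring, by nlinarith [hs], by nlinarith [hs]⟩
end
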